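/- Let Ω ⊆ ℝⁿ be open, let f : Ω → ℝⁿ and A, B, M, N : Ω → ℝ be C¹ with ∂A/∂uⁱ = Σ_k (∂B/∂u^k)(∂f^k/∂uⁱ) and ∂M/∂uⁱ = Σ_k (∂N/∂u^k)(∂f^k/∂uⁱ) on Ω. Set p(u) = (1, u¹, …, uⁿ, B(u), N(u), 0), r(u) = (0, f¹(u), …, fⁿ(u), A(u), M(u), 1), and Z(u) = (Σᵢ uⁱ B_i(u) − B(u), −B_1(u), …, −B_n(u), 1, 0, Σᵢ fⁱ(u) B_i(u) − A(u)) in ℝ^{n+4}, where B_i = ∂B/∂uⁱ. Then for every u ∈ Ω the covector Z(u) annihilates p(u), r(u), and all partial derivatives ∂p/∂uⁱ(u) and ∂r/∂uⁱ(u): the hyperplane {Y : Z(u)·Y = 0} is tangent to the ruled hypersurface along the entire line generator through u. -/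

import Mathlib

/-- The dual pairing `Z·Y = Σ Zᵢ Yᵢ` on `ℝ^{n+4}`, realized as
`ℝ × (Fin n → ℝ) × ℝ × ℝ × ℝ` with coordinates `(Y⁰, Y¹…Yⁿ, Y^{n+1}, Y^{n+2}, Y^{n+3})`. -/
noncomputable def dotV (n : ℕ) (Z Y : ℝ × (Fin n → ℝ) × ℝ × ℝ × ℝ) : ℝ :=
  Z.1 * Y.1 + (∑ i : Fin n, Z.2.1 i * Y.2.1 i) + Z.2.2.1 * Y.2.2.1 +
    Z.2.2.2.1 * Y.2.2.2.1 + Z.2.2.2.2 * Y.2.2.2.2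

/-- For a system of conservation laws with flux `f` admitting two
additional conservation laws `(B, A)` and `(N, M)`, the covector
`Z(u) = (Σᵢ uⁱB_i − B, −B_1, …, −B_n, 1, 0, Σᵢ fⁱB_i − A)` annihilates
`p(u) = (1, u, B, N, 0)`, `r(u) = (0, f, A, M, 1)`, and all partial derivatives
`∂p/∂uⁱ(u)`, `∂r/∂uⁱ(u)`: the hyperplane `{Y : Z(u)·Y = 0}` is tangent to the
ruled hypersurface along the entire line generator through `u`. -/
theorem stmt_3
    (n : ℕ) (Ω : Set (Fin n → ℝ)) (hΩ : IsOpen Ω)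
    (f : (Fin n → ℝ) → (Fin n → ℝ))
    (A B M N : (Fin n → ℝ) → ℝ)
    (hf : ContDiffOn ℝ 1 f Ω) (hA : ContDiffOn ℝ 1 A Ω)
    (hB : ContDiffOn ℝ 1 B Ω) (hM : ContDiffOn ℝ 1 M Ω)
    (hN : ContDiffOn ℝ 1 N Ω)
    (hAB : ∀ u ∈ Ω, ∀ i : Fin n,
      fderiv ℝ A u (Pi.single i 1) =
        ∑ k : Fin n, fderiv ℝ B u (Pi.single k 1) *
          fderiv ℝ (fun x => f x k) u (Pi.single i 1))
    (hMN : ∀ u ∈ Ω, ∀ i : Fin n,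
      fderiv ℝ M u (Pi.single i 1) =
        ∑ k : Fin n, fderiv ℝ N u (Pi.single k 1) *
          fderiv ℝ (fun x => f x k) u (Pi.single i 1))
    (p r Z : (Fin n → ℝ) → ℝ × (Fin n → ℝ) × ℝ × ℝ × ℝ)
    (hp : ∀ u, p u = (1, u, B u, N u, 0))
    (hr : ∀ u, r u = (0, f u, A u, M u, 1))
    (hZ : ∀ u, Z u =
      ((∑ i : Fin n, u i * fderiv ℝ B u (Pi.single i 1)) - B u,
       fun i => -(fderiv ℝ B u (Pi.single i 1)),
       1, 0,
       (∑ i : Fin n, f u i * fderiv ℝ B u (Pi.single i 1)) - A u)) :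
    ∀ u ∈ Ω,
      dotV n (Z u) (p u) = 0 ∧
      dotV n (Z u) (r u) = 0 ∧
      (∀ i : Fin n, dotV n (Z u) (fderiv ℝ p u (Pi.single i 1)) = 0) ∧
      (∀ i : Fin n, dotV n (Z u) (fderiv ℝ r u (Pi.single i 1)) = 0) := by

  intro u hu
  have hmem : Ω ∈ nhds u := hΩ.mem_nhds hu
  have hBd : DifferentiableAt ℝ B u :=
    ((hB.differentiableOn one_ne_zero) u hu).differentiableAt hmem
  have hNd : DifferentiableAt ℝ N u :=
    ((hN.differentiableOn one_ne_zero) u hu).differentiableAt hmem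
  have hAd : DifferentiableAt ℝ A u :=
    ((hA.differentiableOn one_ne_zero) u hu).differentiableAt hmem
  have hMd : DifferentiableAt ℝ M u :=
    ((hM.differentiableOn one_ne_zero) u hu).differentiableAt hmem
  have hfd : DifferentiableAt ℝ f u :=
    ((hf.differentiableOn one_ne_zero) u hu).differentiableAt hmem
  -- derivative of p
  have hp' : p = fun v => ((1:ℝ), v, B v, N v, (0:ℝ)) := funext hp
  have hr' : r = fun v => ((0:ℝ), f v, A v, M v, (1:ℝ)) := funext hr
  have hpP : HasFDerivAt p
      ((0 : (Fin n → ℝ) →L[ℝ] ℝ).prod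
        ((ContinuousLinearMap.id ℝ (Fin n → ℝ)).prod
          ((fderiv ℝ B u).prod ((fderiv ℝ N u).prod (0 : (Fin n → ℝ) →L[ℝ] ℝ))))) u := by
    rw [hp']
    exact HasFDerivAt.prodMk (hasFDerivAt_const _ _) (HasFDerivAt.prodMk (hasFDerivAt_id _)
      (HasFDerivAt.prodMk hBd.hasFDerivAt (HasFDerivAt.prodMk hNd.hasFDerivAt (hasFDerivAt_const _ _))))
  have hrP : HasFDerivAt r
      ((0 : (Fin n → ℝ) →L[ℝ] ℝ).prod
        ((fderiv ℝ f u).prod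
          ((fderiv ℝ A u).prod ((fderiv ℝ M u).prod (0 : (Fin n → ℝ) →L[ℝ] ℝ))))) u := by
    rw [hr']
    exact HasFDerivAt.prodMk (hasFDerivAt_const _ _) (HasFDerivAt.prodMk hfd.hasFDerivAt
      (HasFDerivAt.prodMk hAd.hasFDerivAt (HasFDerivAt.prodMk hMd.hasFDerivAt (hasFDerivAt_const _ _))))
  have hpD := hpP.fderiv
  have hrD := hrP.fderiv
  have hfk : ∀ (k : Fin n) (v : Fin n → ℝ),
      fderiv ℝ (fun x => f x k) u v = fderiv ℝ f u v k := by
    intro k v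
    have h1 : HasFDerivAt (fun x => f x k)
        (((ContinuousLinearMap.proj k : (Fin n → ℝ) →L[ℝ] ℝ)).comp (fderiv ℝ f u)) u := by
      exact
        ((ContinuousLinearMap.proj k : (Fin n → ℝ) →L[ℝ] ℝ)).hasFDerivAt.comp u
          hfd.hasFDerivAt
    rw [h1.fderiv]
    rfl
  refine ⟨?_, ?_, ?_, ?_⟩
  · simp only [dotV, hZ u, hp u]
    simp [mul_comm, neg_mul, Finset.sum_neg_distrib]
    ring
  · simp only [dotV, hZ u, hr u]
    simp [mul_comm, neg_mul, Finset.sum_neg_distrib]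
  · intro i
    simp only [dotV, hZ u, hpD]
    simp [ContinuousLinearMap.prod_apply, Pi.single_apply, mul_ite,
      Finset.sum_ite_eq', mul_comm]
  · intro i
    simp only [dotV, hZ u, hrD]
    have := hAB u hu i
    simp only [hfk] at this
    simp [ContinuousLinearMap.prod_apply, this, neg_mul, Finset.sum_neg_distrib, mul_comm]
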